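/- Let h be a Hessenberg function on {1,…,n}, let m = m(Γ_h) be the maximum sink-set size, and let T be a sink set of Γ_h with |T| = m. Then the restriction map ω ↦ ω_T is a bijection from {ω ∈ A_m(Γ_h) : sk(ω) = T} onto A(Γ_{h_T}), the set of all acyclic orientations of Γ_{h_T}; furthermore asc(ω) = deg(T) + asc(ω_T) for every acyclic orientation ω of Γ_h with sk(ω) = T. -/

import Mathlib

open scoped Classical

/-- `h` is a Hessenberg function on `{1,…,n}`. -/
def IsHessenberg (n : ℕ) (h : ℕ → ℕ) : Prop :=
  (∀ i, 1 ≤ i → i ≤ n → i ≤ h i ∧ h i ≤ n) ∧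
  (∀ i, 1 ≤ i → i < n → h i ≤ h (i + 1))

/-- `{j,i}` (with `j < i`) is an edge of the incomparability graph `Γ_h`. -/
def IsEdge (n : ℕ) (h : ℕ → ℕ) (j i : ℕ) : Prop :=
  1 ≤ j ∧ j < i ∧ i ≤ n ∧ i ≤ h j

/-- The orientation `ω` directs the edge between `u` and `v` from `u` to `v`. -/
def Dir (n : ℕ) (h : ℕ → ℕ) (ω : ℕ → ℕ → Bool) (u v : ℕ) : Prop :=
  (IsEdge n h u v ∧ ω u v = true) ∨ (IsEdge n h v u ∧ ω v u = false)

/-- `ω` is an acyclic orientation of `Γ_h`. -/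
def AcyclicOr (n : ℕ) (h : ℕ → ℕ) (ω : ℕ → ℕ → Bool) : Prop :=
  ∀ v, ¬ Relation.TransGen (Dir n h ω) v v

/-- `v` is a sink of the orientation `ω`. -/
def IsSinkAt (n : ℕ) (h : ℕ → ℕ) (ω : ℕ → ℕ → Bool) (v : ℕ) : Prop :=
  ∀ u, IsEdge n h u v ∨ IsEdge n h v u → Dir n h ω u v

/-- `sk(ω)`, the set of sinks of `ω`. -/
noncomputable def sinks (n : ℕ) (h : ℕ → ℕ) (ω : ℕ → ℕ → Bool) : Finset ℕ :=
  (Finset.Icc 1 n).filter (fun v => IsSinkAt n h ω v)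

/-- `T` is a sink set of `Γ_h`. -/
def IsSinkSet (n : ℕ) (h : ℕ → ℕ) (T : Finset ℕ) : Prop :=
  ∃ ω, AcyclicOr n h ω ∧ sinks n h ω = T

/-- `asc(ω)`: the number of edges `{j,i}`, `j < i`, directed from `j` to `i`. -/
noncomputable def ascOr (n : ℕ) (h : ℕ → ℕ) (ω : ℕ → ℕ → Bool) : ℕ :=
  (((Finset.Icc 1 n) ×ˢ (Finset.Icc 1 n)).filter
    (fun p => IsEdge n h p.1 p.2 ∧ ω p.1 p.2 = true)).card

/-- `m(Γ_h)`: the maximum sink-set size. -/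
noncomputable def maxSinkSize (n : ℕ) (h : ℕ → ℕ) : ℕ :=
  sSup {k | ∃ ω, AcyclicOr n h ω ∧ (sinks n h ω).card = k}

/-- `φ_T(j) = j − #{t ∈ T : t ≤ j}`. -/
def phiT (T : Finset ℕ) (j : ℕ) : ℕ := j - (T.filter (fun t => t ≤ j)).card

/-- The inverse of `φ_T` on `{1,…,n} ∖ T`. -/
noncomputable def psiT (n : ℕ) (T : Finset ℕ) (r : ℕ) : ℕ :=
  sInf {i | 1 ≤ i ∧ i ≤ n ∧ i ∉ T ∧ phiT T i = r}

/-- The induced Hessenberg function `h_T`, defined by `h_T(φ_T(i)) = φ_T(h(i))` for `i ∉ T`. -/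
noncomputable def hFunT (n : ℕ) (h : ℕ → ℕ) (T : Finset ℕ) (r : ℕ) : ℕ :=
  phiT T (h (psiT n T r))

/-- `deg(T)`: the number of edges `{ℓ,ℓ'}` of `Γ_h` with `ℓ' ∈ T` and `ℓ < ℓ'`. -/
noncomputable def degT (n : ℕ) (h : ℕ → ℕ) (T : Finset ℕ) : ℕ :=
  (((Finset.Icc 1 n) ×ˢ (Finset.Icc 1 n)).filter
    (fun p => IsEdge n h p.1 p.2 ∧ p.2 ∈ T)).card

/-- The restricted orientation `ω_T` of `Γ_{h_T}`, transported along `φ_T`. -/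
noncomputable def restrictOr (n : ℕ) (T : Finset ℕ) (ω : ℕ → ℕ → Bool) :
    ℕ → ℕ → Bool :=
  fun r s => ω (psiT n T r) (psiT n T s)

-- ====== aux lemmas ======

lemma edge_to_sink_true {n : ℕ} {h : ℕ → ℕ} {ω : ℕ → ℕ → Bool} {u v : ℕ}
    (hv : IsSinkAt n h ω v) (he : IsEdge n h u v) : ω u v = true := by
  rcases hv u (Or.inl he) with ⟨_, h1⟩ | ⟨h2, _⟩
  · exact h1
  · exact absurd h2.2.1 (by have := he.2.1; omega)

lemma edge_from_sink_false {n : ℕ} {h : ℕ → ℕ} {ω : ℕ → ℕ → Bool} {u v : ℕ}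
    (hu : IsSinkAt n h ω u) (he : IsEdge n h u v) : ω u v = false := by
  rcases hu v (Or.inr he) with ⟨h1, _⟩ | ⟨_, h2⟩
  · exact absurd h1.2.1 (by have := he.2.1; omega)
  · exact h2

lemma no_edge_sinks {n : ℕ} {h : ℕ → ℕ} {ω : ℕ → ℕ → Bool} {u v : ℕ}
    (hu : IsSinkAt n h ω u) (hv : IsSinkAt n h ω v) : ¬ IsEdge n h u v := by
  intro he
  have h1 := edge_to_sink_true hv he
  have h2 := edge_from_sink_false hu he
  simp [h1] at h2

lemma mem_sinks {n : ℕ} {h : ℕ → ℕ} {ω : ℕ → ℕ → Bool} {v : ℕ} :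
    v ∈ sinks n h ω ↔ (1 ≤ v ∧ v ≤ n) ∧ IsSinkAt n h ω v := by
  simp [sinks, Finset.mem_filter, Finset.mem_Icc]

-- phi lemmas
lemma phi_eq {T : Finset ℕ} (hTsub : T ⊆ Finset.Icc 1 n) (j : ℕ) :
    phiT T j = ((Finset.Icc 1 j).filter (fun x => x ∉ T)).card := by
  unfold phiT
  have h1 : T.filter (fun t => t ≤ j) = (Finset.Icc 1 j).filter (fun x => x ∈ T) := by
    ext x
    simp only [Finset.mem_filter, Finset.mem_Icc]
    constructor
    · intro ⟨hx, hxj⟩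
      have := Finset.mem_Icc.mp (hTsub hx)
      exact ⟨⟨this.1, hxj⟩, hx⟩
    · rintro ⟨⟨_, hxj⟩, hx⟩; exact ⟨hx, hxj⟩
  rw [h1]
  have h2 := Finset.card_filter_add_card_filter_not
    (s := Finset.Icc 1 j) (p := fun x => x ∈ T)
  have h3 : (Finset.Icc 1 j).card = j := by rw [Nat.card_Icc]; omega
  omega

lemma phi_mono {T : Finset ℕ} (hTsub : T ⊆ Finset.Icc 1 n) {j k : ℕ} (hjk : j ≤ k) :
    phiT T j ≤ phiT T k := by
  rw [phi_eq hTsub, phi_eq hTsub]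
  exact Finset.card_le_card (Finset.filter_subset_filter _ (Finset.Icc_subset_Icc_right hjk))

lemma phi_lt {T : Finset ℕ} (hTsub : T ⊆ Finset.Icc 1 n) {x i : ℕ}
    (hi1 : 1 ≤ i) (hiT : i ∉ T) (hx : x < i) : phiT T x < phiT T i := by
  rw [phi_eq hTsub, phi_eq hTsub]
  apply Finset.card_lt_card
  constructor
  · exact Finset.filter_subset_filter _ (Finset.Icc_subset_Icc_right (by omega))
  · intro hsub
    have : i ∈ (Finset.Icc 1 x).filter (fun y => y ∉ T) := by
      apply hsub
      simp [Finset.mem_filter, Finset.mem_Icc, hi1, hiT]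
    simp [Finset.mem_filter, Finset.mem_Icc] at this
    omega

lemma le_of_phi_le {T : Finset ℕ} (hTsub : T ⊆ Finset.Icc 1 n) {i x : ℕ}
    (hi1 : 1 ≤ i) (hiT : i ∉ T) (hle : phiT T i ≤ phiT T x) : i ≤ x := by
  by_contra hc
  have := phi_lt hTsub hi1 hiT (show x < i by omega)
  omega

lemma phi_inj {T : Finset ℕ} (hTsub : T ⊆ Finset.Icc 1 n) {i j : ℕ}
    (hi1 : 1 ≤ i) (hiT : i ∉ T) (hj1 : 1 ≤ j) (hjT : j ∉ T)
    (heq : phiT T i = phiT T j) : i = j := by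
  have h1 := le_of_phi_le hTsub hi1 hiT (le_of_eq heq)
  have h2 := le_of_phi_le hTsub hj1 hjT (le_of_eq heq.symm)
  omega

lemma phi_pos {T : Finset ℕ} (hTsub : T ⊆ Finset.Icc 1 n) {i : ℕ}
    (hi1 : 1 ≤ i) (hiT : i ∉ T) : 1 ≤ phiT T i := by
  rw [phi_eq hTsub]
  rw [Nat.one_le_iff_ne_zero, Ne, Finset.card_eq_zero, ← Ne, ← Finset.nonempty_iff_ne_empty]
  exact ⟨i, by simp [Finset.mem_filter, Finset.mem_Icc, hi1, hiT]⟩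

lemma phi_n {T : Finset ℕ} (hTsub : T ⊆ Finset.Icc 1 n) :
    phiT T n = n - T.card := by
  unfold phiT
  congr 2
  apply Finset.filter_true_of_mem
  intro t ht
  exact (Finset.mem_Icc.mp (hTsub ht)).2

lemma phi_le_top {T : Finset ℕ} (hTsub : T ⊆ Finset.Icc 1 n) {i : ℕ} (hin : i ≤ n) :
    phiT T i ≤ n - T.card := by
  have := phi_mono hTsub hin
  rw [phi_n hTsub] at this
  exact this

lemma exists_phi_eq {n : ℕ} {T : Finset ℕ} (hTsub : T ⊆ Finset.Icc 1 n) {r : ℕ}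
    (hr1 : 1 ≤ r) (hr2 : r ≤ n - T.card) :
    ∃ i, 1 ≤ i ∧ i ≤ n ∧ i ∉ T ∧ phiT T i = r := by
  classical
  set S := (Finset.Icc 1 n).filter (fun x => x ∉ T) with hS
  have hcardS : S.card = n - T.card := by
    rw [hS, ← phi_eq hTsub]
    exact phi_n hTsub
  have hinj : Set.InjOn (phiT T) ↑S := by
    intro a ha b hb hab
    simp [hS, Finset.mem_filter, Finset.mem_Icc] at ha hb
    exact phi_inj hTsub ha.1.1 ha.2 hb.1.1 hb.2 hab
  have himg : S.image (phiT T) ⊆ Finset.Icc 1 (n - T.card) := by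
    intro y hy
    rcases Finset.mem_image.mp hy with ⟨a, ha, rfl⟩
    simp [hS, Finset.mem_filter, Finset.mem_Icc] at ha
    exact Finset.mem_Icc.mpr ⟨phi_pos hTsub ha.1.1 ha.2, phi_le_top hTsub ha.1.2⟩
  have hcardimg : (S.image (phiT T)).card = n - T.card := by
    rw [Finset.card_image_of_injOn hinj, hcardS]
  have : S.image (phiT T) = Finset.Icc 1 (n - T.card) := by
    apply Finset.eq_of_subset_of_card_le himg
    rw [hcardimg, Nat.card_Icc]; omega
  have hrmem : r ∈ S.image (phiT T) := by
    rw [this]; exact Finset.mem_Icc.mpr ⟨hr1, hr2⟩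
  rcases Finset.mem_image.mp hrmem with ⟨a, ha, rfl⟩
  simp [hS, Finset.mem_filter, Finset.mem_Icc] at ha
  exact ⟨a, ha.1.1, ha.1.2, ha.2, rfl⟩

lemma psi_spec {n : ℕ} {T : Finset ℕ} (hTsub : T ⊆ Finset.Icc 1 n) {r : ℕ}
    (hr1 : 1 ≤ r) (hr2 : r ≤ n - T.card) :
    1 ≤ psiT n T r ∧ psiT n T r ≤ n ∧ psiT n T r ∉ T ∧ phiT T (psiT n T r) = r := by
  have hne : {i | 1 ≤ i ∧ i ≤ n ∧ i ∉ T ∧ phiT T i = r}.Nonempty := by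
    rcases exists_phi_eq hTsub hr1 hr2 with ⟨i, h1, h2, h3, h4⟩
    exact ⟨i, h1, h2, h3, h4⟩
  exact Nat.sInf_mem hne

lemma psi_phi {n : ℕ} {T : Finset ℕ} (hTsub : T ⊆ Finset.Icc 1 n) {i : ℕ}
    (hi1 : 1 ≤ i) (hin : i ≤ n) (hiT : i ∉ T) : psiT n T (phiT T i) = i := by
  have hne : {j | 1 ≤ j ∧ j ≤ n ∧ j ∉ T ∧ phiT T j = phiT T i}.Nonempty :=
    ⟨i, hi1, hin, hiT, rfl⟩
  have hmem := Nat.sInf_mem hne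
  exact phi_inj hTsub hmem.1 hmem.2.2.1 hi1 hiT hmem.2.2.2

lemma edge_iff {n : ℕ} {h : ℕ → ℕ} {T : Finset ℕ} (hTsub : T ⊆ Finset.Icc 1 n)
    {u v : ℕ} (hu1 : 1 ≤ u) (hun : u ≤ n) (huT : u ∉ T)
    (hv1 : 1 ≤ v) (hvn : v ≤ n) (hvT : v ∉ T) :
    IsEdge n h u v ↔ IsEdge (n - T.card) (hFunT n h T) (phiT T u) (phiT T v) := by
  have hfT : hFunT n h T (phiT T u) = phiT T (h u) := by
    unfold hFunT; rw [psi_phi hTsub hu1 hun huT]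
  constructor
  · intro ⟨_, huv, _, hvh⟩
    refine ⟨phi_pos hTsub hu1 huT, phi_lt hTsub hv1 hvT huv, phi_le_top hTsub hvn, ?_⟩
    rw [hfT]
    exact phi_mono hTsub hvh
  · intro ⟨_, huv, _, hvh⟩
    rw [hfT] at hvh
    have huv' : u < v := by
      by_contra hc
      have := phi_mono hTsub (show v ≤ u by omega)
      omega
    exact ⟨hu1, huv', hvn, le_of_phi_le hTsub hv1 hvT hvh⟩

lemma edge_psi {n : ℕ} {h : ℕ → ℕ} {T : Finset ℕ} (hTsub : T ⊆ Finset.Icc 1 n)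
    {r s : ℕ} (he : IsEdge (n - T.card) (hFunT n h T) r s) :
    IsEdge n h (psiT n T r) (psiT n T s) := by
  obtain ⟨hr1, hrs, hsn, -⟩ := id he
  have hr := psi_spec hTsub hr1 (by omega)
  have hs := psi_spec hTsub (by omega : 1 ≤ s) hsn
  rw [edge_iff hTsub hr.1 hr.2.1 hr.2.2.1 hs.1 hs.2.1 hs.2.2.1, hr.2.2.2, hs.2.2.2]
  exact he

theorem stmt3 (n m : ℕ) (h : ℕ → ℕ) (hn : 1 ≤ n) (hh : IsHessenberg n h)
    (hm : m = maxSinkSize n h)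
    (T : Finset ℕ) (hT : IsSinkSet n h T) (hcard : T.card = m) :
    (∀ ω, AcyclicOr n h ω → sinks n h ω = T →
      AcyclicOr (n - m) (hFunT n h T) (restrictOr n T ω) ∧
      ascOr n h ω = degT n h T + ascOr (n - m) (hFunT n h T) (restrictOr n T ω)) ∧
    (∀ ω₁ ω₂, AcyclicOr n h ω₁ → sinks n h ω₁ = T →
      AcyclicOr n h ω₂ → sinks n h ω₂ = T →
      (∀ r s, IsEdge (n - m) (hFunT n h T) r s →
        restrictOr n T ω₁ r s = restrictOr n T ω₂ r s) →
      (∀ u v, IsEdge n h u v → ω₁ u v = ω₂ u v)) ∧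
    (∀ ω', AcyclicOr (n - m) (hFunT n h T) ω' →
      ∃ ω, AcyclicOr n h ω ∧ sinks n h ω = T ∧
        ∀ r s, IsEdge (n - m) (hFunT n h T) r s →
          restrictOr n T ω r s = ω' r s) := by
  subst hcard
  obtain ⟨ω₀, hω₀ac, hω₀s⟩ := hT
  have hTsub : T ⊆ Finset.Icc 1 n := hω₀s ▸ Finset.filter_subset _ _
  have hbdd : BddAbove {k | ∃ ω, AcyclicOr n h ω ∧ (sinks n h ω).card = k} := by
    refine ⟨n, ?_⟩
    rintro k ⟨ω', -, rfl⟩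
    calc (sinks n h ω').card ≤ (Finset.Icc 1 n).card :=
          Finset.card_le_card (Finset.filter_subset _ _)
      _ = n := by rw [Nat.card_Icc]; omega
  have hle_max : ∀ ω, AcyclicOr n h ω → (sinks n h ω).card ≤ T.card := by
    intro ω hω
    rw [hm]
    exact le_csSup hbdd ⟨ω, hω, rfl⟩
  have hindep : ∀ u v, u ∈ T → v ∈ T → ¬ IsEdge n h u v := by
    intro u v hu hv
    exact no_edge_sinks ((mem_sinks.mp (hω₀s ▸ hu)).2) ((mem_sinks.mp (hω₀s ▸ hv)).2)
  refine ⟨?_, ?_, ?_⟩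
  · -- part 1
    intro ω hωac hωs
    have hsink : ∀ v ∈ T, IsSinkAt n h ω v := fun v hv => (mem_sinks.mp (hωs ▸ hv)).2
    constructor
    · -- acyclicity of the restriction
      intro v hcyc
      apply hωac (psiT n T v)
      refine Relation.TransGen.lift (psiT n T) ?_ v v hcyc
      rintro r s (⟨he, hb⟩ | ⟨he, hb⟩)
      · exact Or.inl ⟨edge_psi hTsub he, by simpa [restrictOr] using hb⟩
      · exact Or.inr ⟨edge_psi hTsub he, by simpa [restrictOr] using hb⟩
    · -- asc formula
      set P := (Finset.Icc 1 n) ×ˢ (Finset.Icc 1 n) with hP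
      set A := P.filter (fun p => IsEdge n h p.1 p.2 ∧ ω p.1 p.2 = true) with hA
      have hsplit := Finset.card_filter_add_card_filter_not
        (s := A) (p := fun p => p.2 ∈ T)
      have e1 : A.filter (fun p => p.2 ∈ T)
          = P.filter (fun p => IsEdge n h p.1 p.2 ∧ p.2 ∈ T) := by
        ext p
        simp only [hA, Finset.mem_filter]
        constructor
        · rintro ⟨⟨hp, he, -⟩, ht⟩
          exact ⟨hp, he, ht⟩
        · rintro ⟨hp, he, ht⟩
          exact ⟨⟨hp, he, edge_to_sink_true (hsink _ ht) he⟩, ht⟩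
      have e2 : (A.filter (fun p => ¬ p.2 ∈ T)).card
          = ascOr (n - T.card) (hFunT n h T) (restrictOr n T ω) := by
        unfold ascOr
        apply Finset.card_bij (fun p _ => (phiT T p.1, phiT T p.2))
        · rintro ⟨a, b⟩ hp
          simp only [hA, Finset.mem_filter] at hp
          obtain ⟨⟨-, he, hb⟩, hbT⟩ := hp
          have haT : a ∉ T := by
            intro ha
            have := edge_from_sink_false (hsink _ ha) he
            simp [this] at hb
          obtain ⟨ha1, hab, hbn, -⟩ := id he
          simp only [Finset.mem_filter, Finset.mem_product, Finset.mem_Icc]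
          refine ⟨⟨⟨phi_pos hTsub ha1 haT, phi_le_top hTsub (by omega)⟩,
            ⟨phi_pos hTsub (by omega) hbT, phi_le_top hTsub hbn⟩⟩, ?_, ?_⟩
          · exact (edge_iff hTsub ha1 (by omega) haT (by omega) hbn hbT).mp he
          · simpa [restrictOr, psi_phi hTsub ha1 (by omega : a ≤ n) haT,
              psi_phi hTsub (by omega : 1 ≤ b) hbn hbT] using hb
        · rintro ⟨a, b⟩ hp ⟨c, d⟩ hq heq
          simp only [hA, Finset.mem_filter] at hp hq
          obtain ⟨⟨-, hep, hbp⟩, hbTp⟩ := hp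
          obtain ⟨⟨-, heq', hbq⟩, hbTq⟩ := hq
          have haTp : a ∉ T := by
            intro ha
            have := edge_from_sink_false (hsink _ ha) hep
            simp [this] at hbp
          have haTq : c ∉ T := by
            intro hc
            have := edge_from_sink_false (hsink _ hc) heq'
            simp [this] at hbq
          obtain ⟨ha1, hab, hbn, -⟩ := id hep
          obtain ⟨hc1, hcd, hdn, -⟩ := id heq'
          have h1 := congrArg Prod.fst heq
          have h2 := congrArg Prod.snd heq
          simp only at h1 h2
          have := phi_inj hTsub ha1 haTp hc1 haTq h1
          have := phi_inj hTsub (by omega : 1 ≤ b) hbTp (by omega : 1 ≤ d) hbTq h2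
          simp_all
        · rintro ⟨r, s⟩ hq
          simp only [Finset.mem_filter, Finset.mem_product, Finset.mem_Icc] at hq
          obtain ⟨-, he', hb'⟩ := hq
          obtain ⟨hr1, hrs, hsn, -⟩ := id he'
          have hr := psi_spec hTsub hr1 (by omega)
          have hs := psi_spec hTsub (by omega : 1 ≤ s) hsn
          refine ⟨(psiT n T r, psiT n T s), ?_, ?_⟩
          · simp only [hA, hP, Finset.mem_filter, Finset.mem_product, Finset.mem_Icc]
            refine ⟨⟨⟨⟨hr.1, hr.2.1⟩, ⟨hs.1, hs.2.1⟩⟩, edge_psi hTsub he', ?_⟩, hs.2.2.1⟩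
            simpa [restrictOr] using hb'
          · simp [hr.2.2.2, hs.2.2.2]
      have hdeg : degT n h T = (A.filter (fun p => p.2 ∈ T)).card := by
        rw [e1]; rfl
      have hasc : ascOr n h ω = A.card := rfl
      omega
  · -- part 2 : injectivity
    intro ω₁ ω₂ h1ac h1s h2ac h2s hagree u v he
    have hs1 : ∀ w ∈ T, IsSinkAt n h ω₁ w := fun w hw => (mem_sinks.mp (h1s ▸ hw)).2
    have hs2 : ∀ w ∈ T, IsSinkAt n h ω₂ w := fun w hw => (mem_sinks.mp (h2s ▸ hw)).2
    obtain ⟨hu1, huv, hvn, -⟩ := id he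
    by_cases hvT : v ∈ T
    · rw [edge_to_sink_true (hs1 v hvT) he, edge_to_sink_true (hs2 v hvT) he]
    · by_cases huT : u ∈ T
      · rw [edge_from_sink_false (hs1 u huT) he, edge_from_sink_false (hs2 u huT) he]
      · have hed := (edge_iff hTsub hu1 (by omega) huT (by omega) hvn hvT).mp he
        have := hagree _ _ hed
        simpa [restrictOr, psi_phi hTsub hu1 (by omega : u ≤ n) huT,
          psi_phi hTsub (by omega : 1 ≤ v) hvn hvT] using this
  · -- part 3 : surjectivity
    intro ω' hω'
    set ω : ℕ → ℕ → Bool := fun u v =>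
      if v ∈ T then true else if u ∈ T then false else ω' (phiT T u) (phiT T v) with hωdef
    have hTsinks : ∀ v ∈ T, IsSinkAt n h ω v := by
      intro v hv u hadj
      rcases hadj with he | he
      · exact Or.inl ⟨he, by simp [hωdef, hv]⟩
      · have huT : u ∉ T := fun hu => hindep v u hv hu he
        exact Or.inr ⟨he, by simp [hωdef, huT, hv]⟩
    have hlift : ∀ a b, Dir n h ω a b →
        a ∉ T ∧ (b ∉ T → Dir (n - T.card) (hFunT n h T) ω' (phiT T a) (phiT T b)) := by
      rintro a b (⟨he, hb⟩ | ⟨he, hb⟩)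
      · obtain ⟨ha1, hab, hbn, -⟩ := id he
        have haT : a ∉ T := by
          intro ha
          have hbT : b ∉ T := fun hb' => hindep a b ha hb' he
          simp [hωdef, hbT, ha] at hb
        refine ⟨haT, fun hbT => ?_⟩
        have hb' : ω' (phiT T a) (phiT T b) = true := by simpa [hωdef, hbT, haT] using hb
        exact Or.inl ⟨(edge_iff hTsub ha1 (by omega) haT (by omega) hbn hbT).mp he, hb'⟩
      · obtain ⟨hb1, hba, han, -⟩ := id he
        have haT : a ∉ T := by
          intro ha
          simp [hωdef, ha] at hb
        refine ⟨haT, fun hbT => ?_⟩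
        have hb' : ω' (phiT T b) (phiT T a) = false := by simpa [hωdef, haT, hbT] using hb
        exact Or.inr ⟨(edge_iff hTsub hb1 (by omega) hbT (by omega) han haT).mp he, hb'⟩
    have hchain : ∀ a b, Relation.TransGen (Dir n h ω) a b →
        a ∉ T ∧ (b ∉ T →
          Relation.TransGen (Dir (n - T.card) (hFunT n h T) ω') (phiT T a) (phiT T b)) := by
      intro a b hab
      induction hab with
      | single hd =>
          exact ⟨(hlift _ _ hd).1, fun hb => Relation.TransGen.single ((hlift _ _ hd).2 hb)⟩
      | tail hab hd ih =>
          have hbT := (hlift _ _ hd).1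
          exact ⟨ih.1, fun hc => (ih.2 hbT).tail ((hlift _ _ hd).2 hc)⟩
    have hωac : AcyclicOr n h ω := by
      intro v hcyc
      rcases hchain v v hcyc with ⟨hvT, htg⟩
      exact hω' (phiT T v) (htg hvT)
    have hsub : T ⊆ sinks n h ω := by
      intro v hv
      have := Finset.mem_Icc.mp (hTsub hv)
      exact mem_sinks.mpr ⟨this, hTsinks v hv⟩
    have hsinks : sinks n h ω = T :=
      (Finset.eq_of_subset_of_card_le hsub (hle_max ω hωac)).symm
    refine ⟨ω, hωac, hsinks, ?_⟩
    intro r s he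
    obtain ⟨hr1, hrs, hsn, -⟩ := id he
    have hr := psi_spec hTsub hr1 (by omega)
    have hs := psi_spec hTsub (by omega : 1 ≤ s) hsn
    simp [restrictOr, hωdef, hr.2.2.1, hs.2.2.1, hr.2.2.2, hs.2.2.2]
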